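/- A beamformer with a nonzero component outside the channel subspace is strictly suboptimal whenever it delivers nonzero signal power: suppose w = (w_1, …, w_N) is power-feasible (Σ_n ‖w_n‖²_{L²(μ)} ≤ P_max), Q(w) ≠ 0, and P_K w_m ≠ w_m for some stream m. Then w is not a maximizer of the spectral efficiency: there exists a power-feasible beamformer w'' (namely the projected beamformer rescaled by t = √(P_max / Σ_n ‖P_K w_n‖²) > 1) with SE(w'') > SE(w). -/

import Mathlib

open MeasureTheory ComplexConjugate

noncomputable section

variable {α β : Type*} [MeasurableSpace α] [MeasurableSpace β]

/-- Effective received signal `e_w(r) = ∫_{S_B} h(r,s) w(s) dμ(s)`. -/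
def eSig (h : β → α → ℂ) (μ : Measure α) (w : Lp ℂ 2 μ) (r : β) : ℂ :=
  ∫ s, h r s * (w : α → ℂ) s ∂μ

/-- The closed linear span `K` of the conjugated channel sections
`{s ↦ conj (h r s) : r ∈ S_U, h(r,·) ∈ L²(μ)}` in `L²(μ; ℂ)`. -/
def chanSub (h : β → α → ℂ) (μ : Measure α) : Submodule ℂ (Lp ℂ 2 μ) :=
  (Submodule.span ℂ {f : Lp ℂ 2 μ |
    ∃ r : β, ∃ hr : MemLp (fun s => conj (h r s)) 2 μ,
      f = hr.toLp (fun s => conj (h r s))}).topologicalClosure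

instance (h : β → α → ℂ) (μ : Measure α) : CompleteSpace (chanSub h μ) :=
  (Submodule.isClosed_topologicalClosure _).completeSpace_coe

/-- The orthogonal projection `P_K` of `L²(μ; ℂ)` onto the channel subspace `K`. -/
def projK (h : β → α → ℂ) (μ : Measure α) (w : Lp ℂ 2 μ) : Lp ℂ 2 μ :=
  ((chanSub h μ).orthogonalProjectionOnto w : Lp ℂ 2 μ)

/-- Signal covariance matrix `Q(w)_{mn} = ∫ conj(e_{w_m}(r)) ⬝ e_{w_n}(r) dν(r)`. -/
def covQ (h : β → α → ℂ) (μ : Measure α) (ν : Measure β) {N : ℕ}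
    (w : Fin N → Lp ℂ 2 μ) : Matrix (Fin N) (Fin N) ℂ :=
  Matrix.of fun m n => ∫ r, conj (eSig h μ (w m) r) * eSig h μ (w n) r ∂ν

/-- Spectral efficiency `SE(w) = log det(I_N + σ⁻² Q(w))`. -/
def SE (h : β → α → ℂ) (μ : Measure α) (ν : Measure β) (σ2 : ℝ) {N : ℕ}
    (w : Fin N → Lp ℂ 2 μ) : ℝ :=
  Real.log ((1 + (σ2⁻¹ : ℂ) • covQ h μ ν w).det.re)

open Matrix
open scoped ComplexOrder InnerProductSpace

/-! ### Auxiliary matrix lemmas -/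

lemma aux_det_one_add_real_smul {N : ℕ} {Q : Matrix (Fin N) (Fin N) ℂ} (hH : Q.IsHermitian)
    (c : ℝ) : (1 + (c : ℂ) • Q).det = ((∏ i, (1 + c * hH.eigenvalues i) : ℝ) : ℂ) := by
  classical
  set U : Matrix (Fin N) (Fin N) ℂ := (hH.eigenvectorUnitary : Matrix (Fin N) (Fin N) ℂ)
  have hU : U * star U = 1 := (Matrix.mem_unitaryGroup_iff).mp hH.eigenvectorUnitary.2
  have hspec := hH.spectral_theorem
  simp only [Unitary.conjStarAlgAut_apply, Unitary.coe_star] at hspec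
  have key : 1 + (c : ℂ) • Q
      = U * (1 + (c : ℂ) • Matrix.diagonal (RCLike.ofReal ∘ hH.eigenvalues)) * star U := by
    rw [Matrix.mul_add, Matrix.add_mul, Matrix.mul_one, hU]
    rw [Matrix.mul_smul, Matrix.smul_mul, ← hspec]
  rw [key, Matrix.det_mul, Matrix.det_mul, mul_comm (Matrix.det U), mul_assoc, ← Matrix.det_mul,
    hU, Matrix.det_one, mul_one]
  have : (1 + (c : ℂ) • Matrix.diagonal (RCLike.ofReal ∘ hH.eigenvalues))
      = Matrix.diagonal (fun i => (1 + c * hH.eigenvalues i : ℝ) : Fin N → ℂ) := by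
    ext i j
    by_cases hij : i = j
    · subst hij; push_cast; simp [Matrix.one_apply]
    · simp [Matrix.one_apply, Matrix.diagonal_apply_ne _ hij, hij]
  rw [this, Matrix.det_diagonal]
  push_cast
  rfl

lemma aux_det_re_pos {N : ℕ} {Q : Matrix (Fin N) (Fin N) ℂ} (hQ : Q.PosSemidef)
    {a : ℝ} (ha : 0 < a) : 0 < (1 + (a : ℂ) • Q).det.re := by
  classical
  rw [aux_det_one_add_real_smul hQ.1 a, Complex.ofReal_re]
  exact Finset.prod_pos fun j _ => by nlinarith [hQ.eigenvalues_nonneg j]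

lemma aux_det_re_lt {N : ℕ} {Q : Matrix (Fin N) (Fin N) ℂ} (hQ : Q.PosSemidef) (hQ0 : Q ≠ 0)
    {a b : ℝ} (ha : 0 < a) (hab : a < b) :
    (1 + (a : ℂ) • Q).det.re < (1 + (b : ℂ) • Q).det.re := by
  classical
  have hH := hQ.1
  rw [aux_det_one_add_real_smul hH a, aux_det_one_add_real_smul hH b,
    Complex.ofReal_re, Complex.ofReal_re]
  have hev : ∀ i, 0 ≤ hH.eigenvalues i := hQ.eigenvalues_nonneg
  have hne : hH.eigenvalues ≠ 0 := by
    intro h0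
    apply hQ0
    have := hH.spectral_theorem
    simp only [Unitary.conjStarAlgAut_apply, Unitary.coe_star] at this
    rwa [h0, Pi.comp_zero, RCLike.ofReal_zero,
      (by rfl : Function.const (Fin N) (0 : ℂ) = fun _ => 0),
      Matrix.diagonal_zero, Matrix.mul_zero, Matrix.zero_mul] at this
  obtain ⟨i, hi⟩ := Function.ne_iff.mp hne
  refine Finset.prod_lt_prod (fun j _ => ?_) (fun j _ => ?_) ⟨i, Finset.mem_univ i, ?_⟩
  · nlinarith [hev j]
  · nlinarith [hev j]
  · have : 0 < hH.eigenvalues i := lt_of_le_of_ne (hev i) (Ne.symm hi)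
    nlinarith

/-! ### Auxiliary analysis lemmas -/

lemma aux_memℒp_conj {μ : Measure α} {f : α → ℂ} (hf : MemLp f 2 μ) :
    MemLp (fun s => conj (f s)) 2 μ := by
  have := hf.1
  refine ⟨RCLike.continuous_conj.comp_aestronglyMeasurable hf.1, ?_⟩
  rw [show (fun s => conj (f s)) = (conj f : α → ℂ) from rfl, eLpNorm_conj]
  exact hf.2

lemma aux_eSig_eq_inner {h : β → α → ℂ} {μ : Measure α} {r : β}
    (hr : MemLp (fun s => conj (h r s)) 2 μ) (u : Lp ℂ 2 μ) :
    eSig h μ u r = ⟪(hr.toLp (fun s => conj (h r s)) : Lp ℂ 2 μ), u⟫_ℂ := by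
  rw [MeasureTheory.L2.inner_def]
  refine (integral_congr_ae ?_).symm
  filter_upwards [hr.coeFn_toLp] with s hs
  rw [RCLike.inner_apply, hs]
  simp [mul_comm]

lemma aux_norm_toLp_sq {h : β → α → ℂ} {μ : Measure α} {r : β}
    (hr : MemLp (fun s => conj (h r s)) 2 μ) :
    ‖(hr.toLp (fun s => conj (h r s)) : Lp ℂ 2 μ)‖ ^ 2 = ∫ s, ‖h r s‖ ^ 2 ∂μ := by
  set f : Lp ℂ 2 μ := hr.toLp (fun s => conj (h r s))
  have h1 : (⟪f, f⟫_ℂ) = ∫ s, ((‖h r s‖ ^ 2 : ℝ) : ℂ) ∂μ := by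
    rw [MeasureTheory.L2.inner_def]
    refine integral_congr_ae ?_
    filter_upwards [hr.coeFn_toLp] with s hs
    rw [RCLike.inner_apply, hs]
    have : ((starRingEnd ℂ)) ((starRingEnd ℂ) (h r s)) * (starRingEnd ℂ) (h r s)
        = ((‖h r s‖ ^ 2 : ℝ) : ℂ) := by
      rw [Complex.conj_conj, Complex.mul_conj]
      norm_cast
      rw [← Complex.sq_norm]
    exact (mul_comm _ _).trans this
  have h2 : RCLike.re (⟪f, f⟫_ℂ) = ‖f‖ ^ 2 := inner_self_eq_norm_sq f
  have h3 : (∫ s, ((‖h r s‖ ^ 2 : ℝ) : ℂ) ∂μ) = ((∫ s, ‖h r s‖ ^ 2 ∂μ : ℝ) : ℂ) :=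
    integral_ofReal
  rw [← h2, h1, h3]
  simp

lemma aux_memℒp_eSig {h : β → α → ℂ} {μ : Measure α} {ν : Measure β}
    [SigmaFinite μ] [SigmaFinite ν]
    (hmeas : Measurable (Function.uncurry h))
    (hL2 : MemLp (Function.uncurry h) 2 (ν.prod μ)) (u : Lp ℂ 2 μ) :
    MemLp (eSig h μ u) 2 ν := by
  have hasm : AEStronglyMeasurable (fun p : β × α => h p.1 p.2 * (u : α → ℂ) p.2) (ν.prod μ) :=
    hmeas.aestronglyMeasurable.mul
      ((Lp.aestronglyMeasurable u).comp_quasiMeasurePreserving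
        MeasureTheory.Measure.quasiMeasurePreserving_snd)
  have hE : AEStronglyMeasurable (eSig h μ u) ν := hasm.integral_prod_right'
  rw [memLp_two_iff_integrable_sq_norm hE]
  have hsq : Integrable (fun p : β × α => ‖h p.1 p.2‖ ^ 2) (ν.prod μ) :=
    (memLp_two_iff_integrable_sq_norm hmeas.aestronglyMeasurable).mp hL2
  have hG : Integrable (fun r => ∫ s, ‖h r s‖ ^ 2 ∂μ) ν := hsq.integral_prod_left
  refine Integrable.mono' (hG.const_mul (‖u‖ ^ 2)) ?_ ?_
  · exact (hE.norm.mul hE.norm).congr (Filter.Eventually.of_forall fun r => (pow_two _).symm)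
  · filter_upwards [hsq.prod_right_ae] with r hr2
    have hrm : MemLp (h r) 2 μ :=
      (memLp_two_iff_integrable_sq_norm
        (hmeas.comp measurable_prodMk_left).aestronglyMeasurable).mpr hr2
    have hrc : MemLp (fun s => conj (h r s)) 2 μ := aux_memℒp_conj hrm
    have hb : ‖eSig h μ u r‖ ≤ ‖(hrc.toLp (fun s => conj (h r s)) : Lp ℂ 2 μ)‖ * ‖u‖ := by
      rw [aux_eSig_eq_inner hrc u]
      exact norm_inner_le_norm _ _
    have hnn : (0:ℝ) ≤ ‖(hrc.toLp (fun s => conj (h r s)) : Lp ℂ 2 μ)‖ * ‖u‖ :=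
      mul_nonneg (norm_nonneg _) (norm_nonneg _)
    calc ‖‖eSig h μ u r‖ ^ 2‖ = ‖eSig h μ u r‖ ^ 2 := by
          rw [Real.norm_of_nonneg (sq_nonneg _)]
      _ ≤ (‖(hrc.toLp (fun s => conj (h r s)) : Lp ℂ 2 μ)‖ * ‖u‖) ^ 2 := by
          exact pow_le_pow_left₀ (norm_nonneg _) hb 2
      _ = ‖u‖ ^ 2 * (∫ s, ‖h r s‖ ^ 2 ∂μ) := by
          rw [mul_pow, aux_norm_toLp_sq hrc]; ring

def eLp {h : β → α → ℂ} {μ : Measure α} {ν : Measure β} [SigmaFinite μ] [SigmaFinite ν]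
    (hmeas : Measurable (Function.uncurry h))
    (hL2 : MemLp (Function.uncurry h) 2 (ν.prod μ)) (u : Lp ℂ 2 μ) : Lp ℂ 2 ν :=
  (aux_memℒp_eSig hmeas hL2 u).toLp (eSig h μ u)

lemma aux_covQ_eq_inner {h : β → α → ℂ} {μ : Measure α} {ν : Measure β}
    [SigmaFinite μ] [SigmaFinite ν]
    (hmeas : Measurable (Function.uncurry h))
    (hL2 : MemLp (Function.uncurry h) 2 (ν.prod μ)) {N : ℕ} (w : Fin N → Lp ℂ 2 μ)
    (m n : Fin N) :
    covQ h μ ν w m n = ⟪eLp hmeas hL2 (w m), eLp hmeas hL2 (w n)⟫_ℂ := by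
  rw [MeasureTheory.L2.inner_def]
  refine integral_congr_ae ?_
  filter_upwards [(aux_memℒp_eSig hmeas hL2 (w m)).coeFn_toLp,
    (aux_memℒp_eSig hmeas hL2 (w n)).coeFn_toLp] with r h1 h2
  rw [RCLike.inner_apply]
  show conj (eSig h μ (w m) r) * eSig h μ (w n) r = _
  rw [show (eLp hmeas hL2 (w m) : β → ℂ) r = eSig h μ (w m) r from h1,
    show (eLp hmeas hL2 (w n) : β → ℂ) r = eSig h μ (w n) r from h2]
  exact mul_comm _ _

lemma aux_covQ_posSemidef {h : β → α → ℂ} {μ : Measure α} {ν : Measure β}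
    [SigmaFinite μ] [SigmaFinite ν]
    (hmeas : Measurable (Function.uncurry h))
    (hL2 : MemLp (Function.uncurry h) 2 (ν.prod μ)) {N : ℕ} (w : Fin N → Lp ℂ 2 μ) :
    (covQ h μ ν w).PosSemidef := by
  classical
  set E : Fin N → Lp ℂ 2 ν := fun n => eLp hmeas hL2 (w n)
  refine Matrix.PosSemidef.of_dotProduct_mulVec_nonneg ?_ ?_
  · ext m n
    rw [Matrix.conjTranspose_apply, aux_covQ_eq_inner hmeas hL2 w n m,
      aux_covQ_eq_inner hmeas hL2 w m n]
    exact inner_conj_symm _ _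
  · intro x
    set v : Lp ℂ 2 ν := ∑ n, x n • E n
    have hvv : ⟪v, v⟫_ℂ = ∑ m, conj (x m) * ∑ n, x n * ⟪E m, E n⟫_ℂ := by
      rw [sum_inner]
      refine Finset.sum_congr rfl fun m _ => ?_
      rw [inner_smul_left, inner_sum]
      congr 1
      refine Finset.sum_congr rfl fun n _ => ?_
      rw [inner_smul_right]
    have key : star x ⬝ᵥ ((covQ h μ ν w) *ᵥ x) = ⟪v, v⟫_ℂ := by
      rw [hvv]
      simp only [dotProduct, Matrix.mulVec, Pi.star_apply, RCLike.star_def]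
      refine Finset.sum_congr rfl fun m _ => ?_
      rw [Finset.mul_sum, Finset.mul_sum]
      refine Finset.sum_congr rfl fun n _ => ?_
      rw [aux_covQ_eq_inner hmeas hL2 w m n]
      ring
    rw [key, inner_self_eq_norm_sq_to_K, ← RCLike.ofReal_pow]
    exact RCLike.ofReal_nonneg.mpr (sq_nonneg _)

lemma aux_eSig_projK_ae {h : β → α → ℂ} {μ : Measure α} {ν : Measure β}
    [SigmaFinite μ] [SigmaFinite ν]
    (hmeas : Measurable (Function.uncurry h))
    (hL2 : MemLp (Function.uncurry h) 2 (ν.prod μ)) (u : Lp ℂ 2 μ) :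
    ∀ᵐ r ∂ν, eSig h μ (projK h μ u) r = eSig h μ u r := by
  have hsq : Integrable (fun p : β × α => ‖h p.1 p.2‖ ^ 2) (ν.prod μ) :=
    (memLp_two_iff_integrable_sq_norm hmeas.aestronglyMeasurable).mp hL2
  filter_upwards [hsq.prod_right_ae] with r hr2
  have hrm : MemLp (h r) 2 μ :=
    (memLp_two_iff_integrable_sq_norm
      (hmeas.comp measurable_prodMk_left).aestronglyMeasurable).mpr hr2
  have hrc : MemLp (fun s => conj (h r s)) 2 μ := aux_memℒp_conj hrm
  rw [aux_eSig_eq_inner hrc, aux_eSig_eq_inner hrc]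
  set f : Lp ℂ 2 μ := hrc.toLp (fun s => conj (h r s))
  have hfK : f ∈ chanSub h μ :=
    Submodule.le_topologicalClosure _ (Submodule.subset_span ⟨r, hrc, rfl⟩)
  have hmem : u - projK h μ u ∈ (chanSub h μ)ᗮ :=
    (chanSub h μ).sub_starProjection_mem_orthogonal u
  have h0 : ⟪f, u - projK h μ u⟫_ℂ = 0 :=
    (Submodule.mem_orthogonal _ _).mp hmem f hfK
  rw [inner_sub_right] at h0
  linear_combination (norm := module) -h0

lemma aux_covQ_projK {h : β → α → ℂ} {μ : Measure α} {ν : Measure β}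
    [SigmaFinite μ] [SigmaFinite ν]
    (hmeas : Measurable (Function.uncurry h))
    (hL2 : MemLp (Function.uncurry h) 2 (ν.prod μ)) {N : ℕ} (w : Fin N → Lp ℂ 2 μ) :
    covQ h μ ν (fun n => projK h μ (w n)) = covQ h μ ν w := by
  ext m n
  refine integral_congr_ae ?_
  filter_upwards [aux_eSig_projK_ae hmeas hL2 (w m), aux_eSig_projK_ae hmeas hL2 (w n)]
    with r h1 h2
  rw [h1, h2]

lemma aux_eSig_smul {h : β → α → ℂ} {μ : Measure α} (c : ℂ) (u : Lp ℂ 2 μ) (r : β) :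
    eSig h μ (c • u) r = c * eSig h μ u r := by
  unfold eSig
  rw [← integral_const_mul]
  refine integral_congr_ae ?_
  filter_upwards [Lp.coeFn_smul c u] with s hs
  rw [hs]
  simp only [Pi.smul_apply, smul_eq_mul]
  ring

lemma aux_covQ_smul {h : β → α → ℂ} {μ : Measure α} {ν : Measure β} (t : ℝ) {N : ℕ}
    (w : Fin N → Lp ℂ 2 μ) :
    covQ h μ ν (fun n => ((t : ℂ)) • w n) = (((t * t : ℝ) : ℂ)) • covQ h μ ν w := by
  ext m n
  show (∫ r, conj (eSig h μ ((t:ℂ) • w m) r) * eSig h μ ((t:ℂ) • w n) r ∂ν)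
      = ((t * t : ℝ) : ℂ) * ∫ r, conj (eSig h μ (w m) r) * eSig h μ (w n) r ∂ν
  rw [← integral_const_mul]
  refine integral_congr_ae (Filter.Eventually.of_forall fun r => ?_)
  simp only [aux_eSig_smul, _root_.map_mul, Complex.conj_ofReal]
  push_cast
  ring

lemma aux_eSig_zero {h : β → α → ℂ} {μ : Measure α} (r : β) :
    eSig h μ (0 : Lp ℂ 2 μ) r = 0 := by
  unfold eSig
  rw [← integral_zero α ℂ (μ := μ)]
  refine integral_congr_ae ?_
  filter_upwards [Lp.coeFn_zero ℂ 2 μ] with s hs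
  rw [hs]
  simp

lemma aux_norm_projK_le {h : β → α → ℂ} {μ : Measure α} (u : Lp ℂ 2 μ) :
    ‖projK h μ u‖ ≤ ‖u‖ := by
  have h0 : ⟪projK h μ u, u - projK h μ u⟫_ℂ = 0 :=
    Submodule.inner_right_of_mem_orthogonal ((chanSub h μ).orthogonalProjectionOnto u).2
      ((chanSub h μ).sub_starProjection_mem_orthogonal u)
  have hdecomp := norm_add_sq_eq_norm_sq_add_norm_sq_of_inner_eq_zero _ _ h0
  rw [add_sub_cancel] at hdecomp
  nlinarith [norm_nonneg (u - projK h μ u), norm_nonneg u, norm_nonneg (projK h μ u),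
    mul_self_nonneg (‖u‖ + ‖projK h μ u‖)]

lemma aux_norm_projK_lt {h : β → α → ℂ} {μ : Measure α} (u : Lp ℂ 2 μ)
    (hne : projK h μ u ≠ u) : ‖projK h μ u‖ ^ 2 < ‖u‖ ^ 2 := by
  have h0 : ⟪projK h μ u, u - projK h μ u⟫_ℂ = 0 :=
    Submodule.inner_right_of_mem_orthogonal ((chanSub h μ).orthogonalProjectionOnto u).2
      ((chanSub h μ).sub_starProjection_mem_orthogonal u)
  have hdecomp := norm_add_sq_eq_norm_sq_add_norm_sq_of_inner_eq_zero _ _ h0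
  rw [add_sub_cancel] at hdecomp
  have hpos : 0 < ‖u - projK h μ u‖ := by
    rw [norm_pos_iff]
    intro hsub
    exact hne (sub_eq_zero.mp hsub).symm
  nlinarith

/-- A beamformer with a nonzero component outside the channel subspace is
strictly suboptimal whenever it delivers nonzero signal power: suppose `w = (w_1, …, w_N)`
is power-feasible (`Σ_n ‖w_n‖² ≤ P_max`), `Q(w) ≠ 0`, and `P_K w_m ≠ w_m` for some stream
`m`. Then `w` is not a maximizer of the spectral efficiency: there exists a power-feasible
beamformer `w''` (namely the projected beamformer rescaled by
`t = √(P_max / Σ_n ‖P_K w_n‖²) > 1`) with `SE(w'') > SE(w)`. -/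
theorem not_maximizer_of_component_outside_chanSub
    (μ : Measure α) (ν : Measure β) [SigmaFinite μ] [SigmaFinite ν]
    (h : β → α → ℂ)
    (hmeas : Measurable (Function.uncurry h))
    (hL2 : MemLp (Function.uncurry h) 2 (ν.prod μ))
    (σ2 : ℝ) (hσ2 : 0 < σ2) (Pmax : ℝ) (hPmax : 0 < Pmax)
    {N : ℕ} (w : Fin N → Lp ℂ 2 μ)
    (hfeas : ∑ n, ‖w n‖ ^ 2 ≤ Pmax)
    (hQ0 : covQ h μ ν w ≠ 0)
    (hm : ∃ m, projK h μ (w m) ≠ w m) :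
    ∃ w'' : Fin N → Lp ℂ 2 μ,
      (∑ n, ‖w'' n‖ ^ 2 ≤ Pmax) ∧ SE h μ ν σ2 w < SE h μ ν σ2 w'' := by
  classical
  set w' : Fin N → Lp ℂ 2 μ := fun n => projK h μ (w n) with hw'
  set S : ℝ := ∑ n, ‖w' n‖ ^ 2 with hS
  have hQw' : covQ h μ ν w' = covQ h μ ν w := aux_covQ_projK hmeas hL2 w
  have hSnonneg : 0 ≤ S := Finset.sum_nonneg fun n _ => sq_nonneg _
  have hSpos : 0 < S := by
    rcases lt_or_eq_of_le hSnonneg with hp | hz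
    · exact hp
    · exfalso
      have hall : ∀ n, w' n = 0 := by
        intro n
        have h1 : ‖w' n‖ ^ 2 = 0 :=
          (Finset.sum_eq_zero_iff_of_nonneg (fun n _ => sq_nonneg ‖w' n‖)).mp hz.symm n
            (Finset.mem_univ n)
        have h2 : ‖w' n‖ = 0 := by
          have := sq_eq_zero_iff.mp h1
          exact this
        exact norm_eq_zero.mp h2
      apply hQ0
      rw [← hQw']
      ext m n
      show (∫ r, conj (eSig h μ (w' m) r) * eSig h μ (w' n) r ∂ν) = 0
      rw [hall m, hall n]
      simp [aux_eSig_zero]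
  have hSlt : S < Pmax := by
    obtain ⟨m, hmne⟩ := hm
    have hstep : S < ∑ n, ‖w n‖ ^ 2 := by
      refine Finset.sum_lt_sum (fun n _ => ?_) ⟨m, Finset.mem_univ m, ?_⟩
      · have h1 := aux_norm_projK_le (h := h) (w n)
        have h2 : ‖w' n‖ = ‖projK h μ (w n)‖ := rfl
        rw [h2]
        nlinarith [norm_nonneg (projK h μ (w n)), norm_nonneg (w n)]
      · exact aux_norm_projK_lt (w m) hmne
    exact lt_of_lt_of_le hstep hfeas
  set c : ℝ := Pmax / S with hc
  have hc1 : 1 < c := (one_lt_div hSpos).mpr hSlt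
  set t : ℝ := Real.sqrt c with ht
  have htt : t * t = c := Real.mul_self_sqrt (by positivity)
  refine ⟨fun n => ((t : ℂ)) • w' n, ?_, ?_⟩
  · have hterm : ∀ n, ‖((t : ℂ)) • w' n‖ ^ 2 = c * ‖w' n‖ ^ 2 := by
      intro n
      rw [norm_smul, Complex.norm_real, Real.norm_eq_abs, mul_pow, sq_abs, pow_two, htt]
    calc ∑ n, ‖((t : ℂ)) • w' n‖ ^ 2 = ∑ n, c * ‖w' n‖ ^ 2 :=
          Finset.sum_congr rfl fun n _ => hterm n
      _ = c * S := by rw [← Finset.mul_sum]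
      _ = Pmax := div_mul_cancel₀ _ (ne_of_gt hSpos)
      _ ≤ Pmax := le_refl _
  · have hcov : covQ h μ ν (fun n => ((t : ℂ)) • w' n) = ((c : ℂ)) • covQ h μ ν w := by
      rw [aux_covQ_smul t w', hQw', htt]
    unfold SE
    rw [hcov]
    have hsmul : (σ2⁻¹ : ℂ) • (((c : ℂ)) • covQ h μ ν w)
        = (((σ2⁻¹ * c : ℝ) : ℂ)) • covQ h μ ν w := by
      rw [smul_smul]
      norm_cast
    rw [hsmul, show ((σ2 : ℂ))⁻¹ = ((σ2⁻¹ : ℝ) : ℂ) by push_cast; ring]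
    have hPSD := aux_covQ_posSemidef hmeas hL2 w
    have ha : (0:ℝ) < σ2⁻¹ := inv_pos.mpr hσ2
    apply Real.log_lt_log (aux_det_re_pos hPSD ha)
    have hb : σ2⁻¹ < σ2⁻¹ * c := by nlinarith
    exact aux_det_re_lt hPSD hQ0 ha hb

end
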